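/- arXiv:1902.02951 — 2 statements merged into one kernel-verified Lean document; each statement's English description precedes it below -/
import Mathlib

section
/- For every L > 0 there exist constants R2 > 0 and H2 > 0, depending only on α, t0, ϑ and L, such that for every h > 0 and every y : [t0,ϑ] → ℝ^n with y(t0) = 0 that is Lipschitz with constant L, the function z(t) = h^{α−1}·(Δ_h^{1−α} y)(t) satisfies ‖z(t)‖ ≤ R2 and ‖z(t) − z(t′)‖ ≤ H2·|t − t′|^α for all t, t′ ∈ [t0,ϑ]. -/
open MeasureTheory Set
open scoped RealInnerProductSpace NNReal

noncomputable section

/-- `ℝ^n`. -/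
abbrev Evec (n : ℕ) := EuclideanSpace ℝ (Fin n)

/-- The Riemann–Liouville fractional integral of order `β` with basepoint `t0`:
`(I^β φ)(t) = (1/Γ(β)) ∫_{t0}^{t} (t-τ)^{β-1} φ(τ) dτ`. -/
def RL (t0 β : ℝ) {n : ℕ} (φ : ℝ → Evec n) (t : ℝ) : Evec n :=
  (1 / Real.Gamma β) • ∫ τ in t0..t, ((t - τ) ^ (β - 1)) • φ τ

/-- The Mittag-Leffler function `E_α(z) = ∑_{k} z^k / Γ(αk+1)`. -/
def ML (α z : ℝ) : ℝ := ∑' k : ℕ, z ^ k / Real.Gamma (α * k + 1)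

/-- The binomial coefficient `binom(β, i) = ∏_{j=0}^{i-1} (β-j)/(j+1)`. -/
def glCoef (β : ℝ) (i : ℕ) : ℝ := ∏ j ∈ Finset.range i, ((β - (j : ℝ)) / ((j : ℝ) + 1))

/-- The Grünwald–Letnikov fractional difference
`(Δ_h^{1-α} y)(t) = ∑_{i=0}^{⌊(t-t0)/h⌋} (-1)^i binom(1-α, i) y(t - i h)`. -/
def glDiff (t0 α h : ℝ) {n : ℕ} (y : ℝ → Evec n) (t : ℝ) : Evec n :=
  ∑ i ∈ Finset.range (⌊(t - t0) / h⌋₊ + 1),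
    ((-1 : ℝ) ^ i * glCoef (1 - α) i) • y (t - (i : ℝ) * h)

/-- The state `w0 + h^{α-1} (Δ_h^{1-α} y)(t)` of the original system reconstructed
from the state `y` of the approximating system. -/
def approxState (t0 α h : ℝ) {n : ℕ} (w0 : Evec n) (y : ℝ → Evec n) (t : ℝ) : Evec n :=
  w0 + (h ^ (α - 1)) • glDiff t0 α h y t

/-- Condition (A.1): `f` is continuous. -/
def CondA1 (t0 ϑ : ℝ) {n r s : ℕ} (U : Set (Evec r)) (V : Set (Evec s))
    (f : ℝ → Evec n → Evec r → Evec s → Evec n) : Prop :=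
  ContinuousOn (fun z : ℝ × Evec n × Evec r × Evec s => f z.1 z.2.1 z.2.2.1 z.2.2.2)
    ((Icc t0 ϑ) ×ˢ (univ : Set (Evec n)) ×ˢ U ×ˢ V)

/-- Condition (A.2): `f` is locally Lipschitz in the state variable, uniformly in the rest. -/
def CondA2 (t0 ϑ : ℝ) {n r s : ℕ} (U : Set (Evec r)) (V : Set (Evec s))
    (f : ℝ → Evec n → Evec r → Evec s → Evec n) : Prop :=
  ∀ R : ℝ, 0 ≤ R → ∃ lam > (0 : ℝ), ∀ t ∈ Icc t0 ϑ, ∀ x x' : Evec n, ‖x‖ ≤ R → ‖x'‖ ≤ R →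
    ∀ u ∈ U, ∀ v ∈ V, ‖f t x u v - f t x' u v‖ ≤ lam * ‖x - x'‖

/-- Condition (A.3): sublinear growth `‖f(t,x,u,v)‖ ≤ (1+‖x‖)c`. -/
def CondA3 (t0 ϑ : ℝ) {n r s : ℕ} (U : Set (Evec r)) (V : Set (Evec s))
    (f : ℝ → Evec n → Evec r → Evec s → Evec n) (c : ℝ) : Prop :=
  ∀ t ∈ Icc t0 ϑ, ∀ x : Evec n, ∀ u ∈ U, ∀ v ∈ V, ‖f t x u v‖ ≤ (1 + ‖x‖) * c

/-- Condition (A.4): the saddle point condition in a small game (Isaacs' condition). -/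
def CondA4 (t0 ϑ : ℝ) {n r s : ℕ} (U : Set (Evec r)) (V : Set (Evec s))
    (f : ℝ → Evec n → Evec r → Evec s → Evec n) : Prop :=
  ∀ t ∈ Icc t0 ϑ, ∀ x sv : Evec n,
    sInf ((fun u => sSup ((fun v => ⟪sv, f t x u v⟫) '' V)) '' U)
      = sSup ((fun v => sInf ((fun u => ⟪sv, f t x u v⟫) '' U)) '' V)

/-- Condition (A.5): `σ` depends only on the restriction of its argument to `[t0, ϑ]` and
is continuous with respect to the uniform norm on `C([t0,ϑ], ℝ^n)`. -/
def CondA5 (t0 ϑ : ℝ) {n : ℕ} (σ : (ℝ → Evec n) → ℝ) : Prop :=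
  (∀ x x' : ℝ → Evec n, (∀ t ∈ Icc t0 ϑ, x t = x' t) → σ x = σ x') ∧
  ∀ x : ℝ → Evec n, ContinuousOn x (Icc t0 ϑ) → ∀ ε > (0 : ℝ), ∃ δ > (0 : ℝ),
    ∀ x' : ℝ → Evec n, ContinuousOn x' (Icc t0 ϑ) →
      (∀ t ∈ Icc t0 ϑ, ‖x t - x' t‖ ≤ δ) → |σ x - σ x'| ≤ ε

/-- An admissible position `(t, w(·))` of the original fractional system, together with the
(Caputo-derivative) witness `φ`. -/
def IsAdmissible (t0 ϑ α c R0 : ℝ) {n : ℕ} (t : ℝ) (w φ : ℝ → Evec n) : Prop :=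
  t ∈ Icc t0 ϑ ∧ ContinuousOn w (Icc t0 t) ∧ ‖w t0‖ ≤ R0 ∧
  Measurable φ ∧ (∃ K : ℝ, ∀ᵐ τ ∂(volume.restrict (Icc t0 t)), ‖φ τ‖ ≤ K) ∧
  (∀ τ ∈ Icc t0 t, w τ = w t0 + RL t0 α φ τ) ∧
  (∀ᵐ τ ∂(volume.restrict (Icc t0 t)), ‖φ τ‖ ≤ (1 + ‖w τ‖) * c)

/-- An admissible control realization on `[tstar, ϑ]` with values in `U`. -/
def IsControl {m : ℕ} (tstar ϑ : ℝ) (U : Set (Evec m)) (u : ℝ → Evec m) : Prop :=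
  Measurable u ∧ ∀ t ∈ Icc tstar ϑ, u t ∈ U

/-- The motion of the original fractional system generated from the initial position
`(tstar, wstar(·))` (with Caputo derivative `φstar`) by control realizations `u`, `v`. -/
def IsMotion (t0 ϑ α : ℝ) {n r s : ℕ} (f : ℝ → Evec n → Evec r → Evec s → Evec n)
    (tstar : ℝ) (wstar φstar : ℝ → Evec n) (u : ℝ → Evec r) (v : ℝ → Evec s)
    (x : ℝ → Evec n) : Prop :=
  ContinuousOn x (Icc t0 ϑ) ∧
  (∀ t ∈ Icc t0 tstar, x t = wstar t) ∧
  (∀ t ∈ Icc tstar ϑ, x t = wstar t0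
    + (1 / Real.Gamma α) • (∫ τ in t0..tstar, ((t - τ) ^ (α - 1)) • φstar τ)
    + (1 / Real.Gamma α) • (∫ τ in tstar..t, ((t - τ) ^ (α - 1)) • f τ (x τ) (u τ) (v τ)))

/-- The motion of the approximating retarded-type system, with parameters `w0`, `h`,
generated from the initial position `(tstar, rstar(·))` by control realizations `p`, `q`. -/
def IsApproxMotion (t0 ϑ α : ℝ) {n r s : ℕ} (f : ℝ → Evec n → Evec r → Evec s → Evec n)
    (w0 : Evec n) (h : ℝ) (tstar : ℝ) (rstar : ℝ → Evec n)
    (p : ℝ → Evec r) (q : ℝ → Evec s) (y : ℝ → Evec n) : Prop :=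
  (∃ K : ℝ≥0, LipschitzOnWith K y (Icc t0 ϑ)) ∧
  (∀ t ∈ Icc t0 tstar, y t = rstar t) ∧
  (∀ᵐ t ∂(volume.restrict (Icc tstar ϑ)),
    HasDerivAt y (f t (approxState t0 α h w0 y t) (p t) (q t)) t)

/-- The initial position of the approximating system corresponding to an initial
position `(tstar, wstar(·))` of the original system:
`r*(t) = (I^{1-α}(w*(·) - w*(t0)))(t)`. -/
def rstarOf (t0 α : ℝ) {n : ℕ} (wstar : ℝ → Evec n) : ℝ → Evec n :=
  RL t0 (1 - α) (fun τ => wstar τ - wstar t0)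

/-- A non-anticipative strategy: a map from opponent control realizations (valued in `VO`)
to own control realizations (valued in `UO`) such that a.e. coincidence of inputs up to any
time implies a.e. coincidence of outputs up to that time. -/
def Nonanticipative {a b : ℕ} (tstar ϑ : ℝ) (UO : Set (Evec a)) (VO : Set (Evec b))
    (A : (ℝ → Evec b) → (ℝ → Evec a)) : Prop :=
  (∀ v, IsControl tstar ϑ VO v → IsControl tstar ϑ UO (A v)) ∧
  ∀ that ∈ Icc tstar ϑ, ∀ v v', IsControl tstar ϑ VO v → IsControl tstar ϑ VO v' →
    (∀ᵐ t ∂(volume.restrict (Icc tstar that)), v t = v' t) →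
    (∀ᵐ t ∂(volume.restrict (Icc tstar that)), A v t = A v' t)

/-- The lower value `Γ⁻(t*, w*(·)) = inf_A sup_{v(·)} σ(x(·))` of the original game. -/
def lowerValue (t0 ϑ α : ℝ) {n r s : ℕ} (U : Set (Evec r)) (V : Set (Evec s))
    (f : ℝ → Evec n → Evec r → Evec s → Evec n) (σ : (ℝ → Evec n) → ℝ)
    (tstar : ℝ) (wstar φstar : ℝ → Evec n) : ℝ :=
  sInf { a : ℝ | ∃ A : (ℝ → Evec s) → (ℝ → Evec r), Nonanticipative tstar ϑ U V A ∧
    a = sSup { g : ℝ | ∃ v x, IsControl tstar ϑ V v ∧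
      IsMotion t0 ϑ α f tstar wstar φstar (A v) v x ∧ g = σ x } }

/-- The upper value `Γ⁺(t*, w*(·)) = sup_B inf_{u(·)} σ(x(·))` of the original game. -/
def upperValue (t0 ϑ α : ℝ) {n r s : ℕ} (U : Set (Evec r)) (V : Set (Evec s))
    (f : ℝ → Evec n → Evec r → Evec s → Evec n) (σ : (ℝ → Evec n) → ℝ)
    (tstar : ℝ) (wstar φstar : ℝ → Evec n) : ℝ :=
  sSup { a : ℝ | ∃ B : (ℝ → Evec r) → (ℝ → Evec s), Nonanticipative tstar ϑ V U B ∧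
    a = sInf { g : ℝ | ∃ u x, IsControl tstar ϑ U u ∧
      IsMotion t0 ϑ α f tstar wstar φstar u (B u) x ∧ g = σ x } }

/-- The lower value of the approximating differential game with parameters `w0`, `h`,
from the initial position `(tstar, rstar(·))`. -/
def approxValue (t0 ϑ α : ℝ) {n r s : ℕ} (U : Set (Evec r)) (V : Set (Evec s))
    (f : ℝ → Evec n → Evec r → Evec s → Evec n) (σ : (ℝ → Evec n) → ℝ)
    (w0 : Evec n) (h : ℝ) (tstar : ℝ) (rstar : ℝ → Evec n) : ℝ :=
  sInf { a : ℝ | ∃ A : (ℝ → Evec s) → (ℝ → Evec r), Nonanticipative tstar ϑ U V A ∧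
    a = sSup { g : ℝ | ∃ q y, IsControl tstar ϑ V q ∧
      IsApproxMotion t0 ϑ α f w0 h tstar rstar (A q) q y ∧
      g = σ (approxState t0 α h w0 y) } }

/-- The upper value of the approximating differential game. -/
def approxUpperValue (t0 ϑ α : ℝ) {n r s : ℕ} (U : Set (Evec r)) (V : Set (Evec s))
    (f : ℝ → Evec n → Evec r → Evec s → Evec n) (σ : (ℝ → Evec n) → ℝ)
    (w0 : Evec n) (h : ℝ) (tstar : ℝ) (rstar : ℝ → Evec n) : ℝ :=
  sSup { a : ℝ | ∃ B : (ℝ → Evec r) → (ℝ → Evec s), Nonanticipative tstar ϑ V U B ∧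
    a = sInf { g : ℝ | ∃ p y, IsControl tstar ϑ U p ∧
      IsApproxMotion t0 ϑ α f w0 h tstar rstar p (B p) y ∧
      g = σ (approxState t0 α h w0 y) } }

/-- The value `Γ_h(t*, w*(·))` of the approximating game for an admissible position of the
original system. -/
def GammaH (t0 ϑ α : ℝ) {n r s : ℕ} (U : Set (Evec r)) (V : Set (Evec s))
    (f : ℝ → Evec n → Evec r → Evec s → Evec n) (σ : (ℝ → Evec n) → ℝ)
    (h : ℝ) (tstar : ℝ) (wstar : ℝ → Evec n) : ℝ :=
  approxValue t0 ϑ α U V f σ (wstar t0) h tstar (rstarOf t0 α wstar)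

/-- An admissible position `(t, rr(·)) ∈ G_h^0` of the approximating system, where
`ctilde` is the constant `c̃_h`. -/
def IsApproxAdmissiblePos (t0 ϑ : ℝ) (ctilde : ℝ) {n : ℕ} (t : ℝ) (rr : ℝ → Evec n) : Prop :=
  t ∈ Icc t0 ϑ ∧ rr t0 = 0 ∧ (∃ K : ℝ≥0, LipschitzOnWith K rr (Icc t0 t)) ∧
  ∀ᵐ τ ∂(volume.restrict (Icc t0 t)), ∀ d : Evec n, HasDerivAt rr d τ →
    ‖d‖ ≤ (1 + sSup ((fun ξ => ‖rr ξ‖) '' Icc t0 τ)) * ctilde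

/-- A partition `t* = τ_1 < τ_2 < … < τ_{k+1} = ϑ` of `[t*, ϑ]`. -/
def IsPartition (tstar ϑ : ℝ) (k : ℕ) (τ : ℕ → ℝ) : Prop :=
  1 ≤ k ∧ τ 1 = tstar ∧ τ (k + 1) = ϑ ∧ ∀ j : ℕ, 1 ≤ j → j ≤ k → τ j < τ (j + 1)

/-- `u0` attains `min_{u ∈ U} max_{v ∈ V} ⟨sv, f(t, x, u, v)⟩`. -/
def MinMaxPoint {n r s : ℕ} (U : Set (Evec r)) (V : Set (Evec s))
    (f : ℝ → Evec n → Evec r → Evec s → Evec n) (t : ℝ) (x sv : Evec n) (u0 : Evec r) : Prop :=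
  u0 ∈ U ∧ ∀ u ∈ U,
    sSup ((fun v => ⟪sv, f t x u0 v⟫) '' V) ≤ sSup ((fun v => ⟪sv, f t x u v⟫) '' V)

/-- `v0` attains `max_{v ∈ V} min_{u ∈ U} ⟨sv, f(t, x, u, v)⟩`. -/
def MaxMinPoint {n r s : ℕ} (U : Set (Evec r)) (V : Set (Evec s))
    (f : ℝ → Evec n → Evec r → Evec s → Evec n) (t : ℝ) (x sv : Evec n) (v0 : Evec s) : Prop :=
  v0 ∈ V ∧ ∀ v ∈ V,
    sInf ((fun u => ⟪sv, f t x u v⟫) '' U) ≤ sInf ((fun u => ⟪sv, f t x u v0⟫) '' U)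

/-- The first player's mutual aiming rule: on each step `[τ_j, τ_{j+1})`, with
`s_j = x(τ_j) - w0 - h^{α-1}(Δ_h^{1-α} y)(τ_j)`, the control `u` in the original system
attains the corresponding minimax and the control `q` in the guide attains the corresponding
maximin, both controls being constant on the step. -/
def FirstAiming (t0 α : ℝ) {n r s : ℕ} (U : Set (Evec r)) (V : Set (Evec s))
    (f : ℝ → Evec n → Evec r → Evec s → Evec n) (w0 : Evec n) (h : ℝ)
    (k : ℕ) (τ : ℕ → ℝ) (x y : ℝ → Evec n) (u : ℝ → Evec r) (q : ℝ → Evec s) : Prop :=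
  ∀ j : ℕ, 1 ≤ j → j ≤ k →
    MinMaxPoint U V f (τ j) (x (τ j))
      (x (τ j) - approxState t0 α h w0 y (τ j)) (u (τ j)) ∧
    MaxMinPoint U V f (τ j) (approxState t0 α h w0 y (τ j))
      (x (τ j) - approxState t0 α h w0 y (τ j)) (q (τ j)) ∧
    ∀ t ∈ Ico (τ j) (τ (j + 1)), u t = u (τ j) ∧ q t = q (τ j)

/-- The second player's mutual aiming rule: on each step `[τ_j, τ_{j+1})`, with
`s_j = w0 + h^{α-1}(Δ_h^{1-α} y)(τ_j) - x(τ_j)`, the control `v` in the original system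
attains the corresponding maximin and the control `p` in the guide attains the corresponding
minimax, both controls being constant on the step. -/
def SecondAiming (t0 α : ℝ) {n r s : ℕ} (U : Set (Evec r)) (V : Set (Evec s))
    (f : ℝ → Evec n → Evec r → Evec s → Evec n) (w0 : Evec n) (h : ℝ)
    (k : ℕ) (τ : ℕ → ℝ) (x y : ℝ → Evec n) (v : ℝ → Evec s) (p : ℝ → Evec r) : Prop :=
  ∀ j : ℕ, 1 ≤ j → j ≤ k →
    MaxMinPoint U V f (τ j) (x (τ j))
      (approxState t0 α h w0 y (τ j) - x (τ j)) (v (τ j)) ∧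
    MinMaxPoint U V f (τ j) (approxState t0 α h w0 y (τ j))
      (approxState t0 α h w0 y (τ j) - x (τ j)) (p (τ j)) ∧
    ∀ t ∈ Ico (τ j) (τ (j + 1)), v t = v (τ j) ∧ p t = p (τ j)


namespace GLB

private def Sca (α : ℝ) (j : ℕ) : ℝ := ∏ m ∈ Finset.range j, ((α + m) / (m + 1))

private lemma Sca_zero (α : ℝ) : Sca α 0 = 1 := by simp [Sca]

private lemma Sca_succ (α : ℝ) (j : ℕ) : Sca α (j + 1) = Sca α j * ((α + j) / (j + 1)) := by
  simp [Sca, Finset.prod_range_succ]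
  rw [div_mul_div_comm]

private lemma Sca_pos {α : ℝ} (h0 : 0 < α) (j : ℕ) : 0 < Sca α j :=
  Finset.prod_pos fun m _ => div_pos (by positivity) (by positivity)

private lemma Sca_succ_le {α : ℝ} (h0 : 0 < α) (h1 : α ≤ 1) (j : ℕ) : Sca α (j + 1) ≤ Sca α j := by
  rw [Sca_succ]
  have hfac : (α + j) / (j + 1) ≤ 1 := by
    rw [div_le_one (by positivity)]; linarith
  exact mul_le_of_le_one_right (Sca_pos h0 j).le hfac

private lemma Sca_anti {α : ℝ} (h0 : 0 < α) (h1 : α ≤ 1) : Antitone (Sca α) :=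
  antitone_nat_of_succ_le (Sca_succ_le h0 h1)

private lemma Sca_le_one {α : ℝ} (h0 : 0 < α) (h1 : α ≤ 1) (j : ℕ) : Sca α j ≤ 1 := by
  simpa [Sca_zero] using Sca_anti h0 h1 (Nat.zero_le j)

private lemma glCoef_succ (β : ℝ) (i : ℕ) :
    glCoef β (i + 1) = glCoef β i * ((β - i) / (i + 1)) := by
  simp [glCoef, Finset.prod_range_succ]
  rw [div_mul_div_comm]

private lemma A_succ (α : ℝ) (i : ℕ) :
    (-1 : ℝ) ^ (i + 1) * glCoef (1 - α) (i + 1) = Sca α i * ((α - 1) / (i + 1)) := by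
  induction i with
  | zero => simp [glCoef_succ, glCoef, Sca]
  | succ i ih =>
      have hi1 : ((i : ℝ) + 1) ≠ 0 := by positivity
      have hi2 : ((i : ℝ) + 2) ≠ 0 := by positivity
      rw [glCoef_succ]
      have hgl : (-1 : ℝ) ^ (i + 1 + 1) * (glCoef (1 - α) (i + 1) * ((1 - α - (↑(i + 1))) / (↑(i + 1) + 1)))
          = ((-1 : ℝ) ^ (i + 1) * glCoef (1 - α) (i + 1)) * ((α + i) / (i + 2)) := by
        have hi3 : ((i:ℝ) + 1 + 1) ≠ 0 := by positivity
        push_cast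
        rw [pow_succ]
        field_simp
        ring
      rw [hgl, ih, Sca_succ]
      push_cast
      field_simp
      ring

private lemma A_eq {α : ℝ} (i : ℕ) :
    (-1 : ℝ) ^ (i + 1) * glCoef (1 - α) (i + 1) = Sca α (i + 1) - Sca α i := by
  rw [A_succ, Sca_succ]
  have hi1 : ((i : ℝ) + 1) ≠ 0 := by positivity
  field_simp
  ring

private lemma A_abs {α : ℝ} (h0 : 0 < α) (h1 : α ≤ 1) (i : ℕ) :
    |(-1 : ℝ) ^ (i + 1) * glCoef (1 - α) (i + 1)| = Sca α i - Sca α (i + 1) := by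
  rw [A_eq, abs_sub_comm, abs_of_nonneg (by linarith [Sca_succ_le h0 h1 i])]

private lemma sum_absA_le {α : ℝ} (h0 : 0 < α) (h1 : α ≤ 1) (m : ℕ) :
    ∑ i ∈ Finset.range (m + 1), |(-1 : ℝ) ^ i * glCoef (1 - α) i| ≤ 2 := by
  rw [Finset.sum_range_succ']
  have h2 : ∑ i ∈ Finset.range m, |(-1 : ℝ) ^ (i + 1) * glCoef (1 - α) (i + 1)|
      = Sca α 0 - Sca α m := by
    rw [← Finset.sum_range_sub' (f := Sca α) m]
    exact Finset.sum_congr rfl fun i _ => A_abs h0 h1 i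
  have h3 : |(-1 : ℝ) ^ 0 * glCoef (1 - α) 0| = 1 := by simp [glCoef]
  rw [h2, h3, Sca_zero]
  have := (Sca_pos h0 m).le
  linarith

private lemma abel_sum (α : ℝ) {E : Type*} [AddCommGroup E] [Module ℝ E] (v : ℕ → E) (M : ℕ) :
    ∑ i ∈ Finset.range (M + 1), ((-1 : ℝ) ^ i * glCoef (1 - α) i) • v i
      = (∑ k ∈ Finset.range M, Sca α k • (v k - v (k + 1))) + Sca α M • v M := by
  induction M with
  | zero => simp [glCoef, Sca]
  | succ M ih =>
      rw [Finset.sum_range_succ (f := fun i => ((-1 : ℝ) ^ i * glCoef (1 - α) i) • v i) (n := M + 1), ih,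
        Finset.sum_range_succ (f := fun k => Sca α k • (v k - v (k + 1))) (n := M), A_eq]
      rw [smul_sub, sub_smul]
      abel

private lemma concave_step {α P Q : ℝ} (h0 : 0 < α) (h1 : α < 1) (hP : 0 ≤ P) (hQ : 0 ≤ Q)
    (hpos : 0 < P + Q) :
    α * Q * (P + Q) ^ (α - 1) ≤ (P + Q) ^ α - P ^ α := by
  have hamgm : P ^ α * (P + Q) ^ (1 - α) ≤ α * P + (1 - α) * (P + Q) :=
    Real.geom_mean_le_arith_mean2_weighted h0.le (by linarith) hP (by linarith) (by ring)
  have hmul : 0 ≤ (P + Q) ^ (α - 1) := (Real.rpow_pos_of_pos hpos _).le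
  have h2 := mul_le_mul_of_nonneg_right hamgm hmul
  have e1 : P ^ α * (P + Q) ^ (1 - α) * (P + Q) ^ (α - 1) = P ^ α := by
    rw [mul_assoc, ← Real.rpow_add hpos]
    norm_num
  have e2 : (P + Q) * (P + Q) ^ (α - 1) = (P + Q) ^ α := by
    nth_rewrite 1 [← Real.rpow_one (P + Q)]
    rw [← Real.rpow_add hpos]; ring_nf
  have e3 : (α * P + (1 - α) * (P + Q)) * (P + Q) ^ (α - 1)
      = (P + Q) ^ α - α * Q * (P + Q) ^ (α - 1) := by
    have h4 : (α * P + (1 - α) * (P + Q)) = (P + Q) - α * Q := by ring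
    rw [h4, sub_mul, e2]
  rw [e1, e3] at h2
  linarith

private lemma Sca_le_rpow {α : ℝ} (h0 : 0 < α) (h1 : α < 1) (j : ℕ) :
    Sca α j ≤ ((j : ℝ) + 1) ^ (α - 1) := by
  induction j with
  | zero => simp [Sca_zero]
  | succ j ih =>
      rw [Sca_succ]
      have hx : (0:ℝ) < (j:ℝ) + 1 := by positivity
      have hx2 : (0:ℝ) < (j:ℝ) + 2 := by positivity
      have hxα : (0:ℝ) < (j:ℝ) + α := by positivity
      have hw : (0:ℝ) < 2 - α := by linarith
      have hamgm : ((j:ℝ) + α) ^ ((2 - α)⁻¹) * ((j:ℝ) + 2) ^ ((1 - α) / (2 - α))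
          ≤ (2 - α)⁻¹ * ((j:ℝ) + α) + ((1 - α) / (2 - α)) * ((j:ℝ) + 2) := by
        refine Real.geom_mean_le_arith_mean2_weighted (by positivity)
          (div_nonneg (by linarith) (by linarith)) hxα.le hx2.le ?_
        field_simp
        linarith
      have hsum : (2 - α)⁻¹ * ((j:ℝ) + α) + ((1 - α) / (2 - α)) * ((j:ℝ) + 2) = (j:ℝ) + 1 := by
        field_simp
        ring
      rw [hsum] at hamgm
      have hkey : ((j:ℝ) + α) * ((j:ℝ) + 2) ^ (1 - α) ≤ ((j:ℝ) + 1) ^ (2 - α) := by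
        have hbase : 0 ≤ ((j:ℝ) + α) ^ ((2 - α)⁻¹) * ((j:ℝ) + 2) ^ ((1 - α) / (2 - α)) := by
          positivity
        have h5 := Real.rpow_le_rpow hbase hamgm (by linarith : (0:ℝ) ≤ 2 - α)
        rwa [Real.mul_rpow (by positivity) (by positivity),
          ← Real.rpow_mul hxα.le, ← Real.rpow_mul hx2.le,
          inv_mul_cancel₀ hw.ne', div_mul_cancel₀ _ hw.ne', Real.rpow_one] at h5
      set y1 := ((j:ℝ) + 1) ^ (1 - α) with hy1
      set y2 := ((j:ℝ) + 2) ^ (1 - α) with hy2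
      have hp1 : (0:ℝ) < y1 := Real.rpow_pos_of_pos hx _
      have hp2 : (0:ℝ) < y2 := Real.rpow_pos_of_pos hx2 _
      have hkey2 : ((j:ℝ) + α) * y2 ≤ y1 * ((j:ℝ) + 1) := by
        have e4 : ((j:ℝ) + 1) ^ (2 - α) = y1 * ((j:ℝ) + 1) := by
          have e4' : (2 - α) = (1 - α) + 1 := by ring
          rw [hy1, e4', Real.rpow_add hx, Real.rpow_one]
        rw [e4] at hkey
        simpa using hkey
      have h21 : ((j:ℝ) + 2) ^ (α - 1) = y2⁻¹ := by
        rw [hy2, ← Real.rpow_neg hx2.le]; congr 1; ring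
      have h22 : ((j:ℝ) + 1) ^ (α - 1) = y1⁻¹ := by
        rw [hy1, ← Real.rpow_neg hx.le]; congr 1; ring
      have hstep : ((j:ℝ) + 1) ^ (α - 1) * ((α + j) / (j + 1)) ≤ ((j:ℝ) + 2) ^ (α - 1) := by
        rw [h21, h22]
        have e5 : y1⁻¹ * ((α + (j:ℝ)) / ((j:ℝ) + 1)) = (α + (j:ℝ)) / (((j:ℝ) + 1) * y1) := by
          field_simp
        have e6 : y2⁻¹ = 1 / y2 := by rw [one_div]
        rw [e5, e6, div_le_div_iff₀ (by positivity) hp2]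
        nlinarith [hkey2]
      calc Sca α j * ((α + ↑j) / (↑j + 1)) ≤ ((j:ℝ) + 1) ^ (α - 1) * ((α + ↑j) / (↑j + 1)) := by
            have hnn : (0:ℝ) ≤ (α + ↑j) / (↑j + 1) := by positivity
            exact mul_le_mul_of_nonneg_right ih hnn
        _ ≤ ((j:ℝ) + 2) ^ (α - 1) := hstep
        _ = (↑(j + 1) + 1) ^ (α - 1) := by push_cast; ring_nf

private lemma weighted_sum_le {α h : ℝ} (h0 : 0 < α) (h1 : α < 1) (hh : 0 < h)
    (Δ : ℕ → ℝ) (hΔ0 : ∀ k, 0 ≤ Δ k) (hΔh : ∀ k, Δ k ≤ h) (m : ℕ) :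
    h ^ (α - 1) * ∑ k ∈ Finset.range m, ((k : ℝ) + 1) ^ (α - 1) * Δ k
      ≤ (∑ k ∈ Finset.range m, Δ k) ^ α / α := by
  induction m with
  | zero => simp [Real.zero_rpow h0.ne']
  | succ m ih =>
      rw [Finset.sum_range_succ, Finset.sum_range_succ, mul_add]
      set P := ∑ k ∈ Finset.range m, Δ k with hP
      have hP0 : 0 ≤ P := Finset.sum_nonneg fun k _ => hΔ0 k
      have hPm : P ≤ m * h := by
        calc P ≤ ∑ k ∈ Finset.range m, h := Finset.sum_le_sum fun k _ => hΔh k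
          _ = m * h := by simp [mul_comm]
      have hQ0 : 0 ≤ Δ m := hΔ0 m
      rcases eq_or_lt_of_le hQ0 with hQz | hQp
      · rw [← hQz]
        simpa using ih
      · have hpos : 0 < P + Δ m := by linarith
        have hle : P + Δ m ≤ ((m:ℝ) + 1) * h := by
          have := hΔh m; nlinarith
        have hmono : (((m:ℝ) + 1) * h) ^ (α - 1) ≤ (P + Δ m) ^ (α - 1) :=
          Real.rpow_le_rpow_of_nonpos hpos hle (by linarith)
        have hsplit : h ^ (α - 1) * (((m:ℝ) + 1) ^ (α - 1) * Δ m)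
            = (((m:ℝ) + 1) * h) ^ (α - 1) * Δ m := by
          rw [Real.mul_rpow (by positivity) hh.le]; ring
        have hlast : h ^ (α - 1) * (((m:ℝ) + 1) ^ (α - 1) * Δ m)
            ≤ ((P + Δ m) ^ α - P ^ α) / α := by
          rw [hsplit, le_div_iff₀ h0]
          calc (((m:ℝ) + 1) * h) ^ (α - 1) * Δ m * α ≤ (P + Δ m) ^ (α - 1) * Δ m * α := by
                have hn : (0:ℝ) ≤ Δ m * α := by positivity
                nlinarith [hmono, hQ0, h0]
            _ = α * Δ m * (P + Δ m) ^ (α - 1) := by ring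
            _ ≤ (P + Δ m) ^ α - P ^ α := concave_step h0 h1 hP0 hQ0 hpos
        calc h ^ (α - 1) * ∑ x ∈ Finset.range m, ((x:ℝ) + 1) ^ (α - 1) * Δ x
              + h ^ (α - 1) * (((m:ℝ) + 1) ^ (α - 1) * Δ m)
            ≤ P ^ α / α + ((P + Δ m) ^ α - P ^ α) / α := add_le_add (by rw [hP]; exact ih) hlast
          _ = (P + Δ m) ^ α / α := by ring

end GLB


set_option maxHeartbeats 2000000 in
/-- cf. [Gomoyunov 2018, Proposition 7]: for every `L > 0` there exist
`R2, H2 > 0`, depending only on `α, t0, ϑ, L`, bounding `z(t) = h^{α-1}(Δ_h^{1-α}y)(t)`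
and its Hölder modulus, for every `h > 0` and every `y` vanishing at `t0` that is
Lipschitz with constant `L`. -/
theorem glDiff_uniform_bounds
    (t0 ϑ : ℝ) (hT : t0 < ϑ) (n : ℕ) (hn : 1 ≤ n) (α : ℝ) (hα : α ∈ Set.Ioo (0 : ℝ) 1) :
    ∀ L > (0 : ℝ), ∃ R2 > (0 : ℝ), ∃ H2 > (0 : ℝ), ∀ h > (0 : ℝ),
      ∀ y : ℝ → Evec n, y t0 = 0 →
      (∀ t ∈ Icc t0 ϑ, ∀ t' ∈ Icc t0 ϑ, ‖y t - y t'‖ ≤ L * |t - t'|) →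
      ∀ t ∈ Icc t0 ϑ,
        ‖(h ^ (α - 1)) • glDiff t0 α h y t‖ ≤ R2 ∧
        ∀ t' ∈ Icc t0 ϑ,
          ‖(h ^ (α - 1)) • glDiff t0 α h y t - (h ^ (α - 1)) • glDiff t0 α h y t'‖
            ≤ H2 * |t - t'| ^ α := by
  obtain ⟨hα0, hα1⟩ := hα
  have hϑ : (0:ℝ) < ϑ - t0 := sub_pos.mpr hT
  intro L hL
  refine ⟨L * (ϑ - t0) ^ α / α, by positivity, L * (2 / α + 3), by positivity, ?_⟩
  intro h hh y hy0 hyL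
  have hhp : (0:ℝ) < h ^ (α - 1) := Real.rpow_pos_of_pos hh _
  obtain ⟨Y, hYdef⟩ : ∃ Y : ℝ → Evec n, Y = fun s => y (max s t0) := ⟨_, rfl⟩
  have hmem : ∀ s : ℝ, s ≤ ϑ → max s t0 ∈ Icc t0 ϑ :=
    fun s hs => ⟨le_max_right _ _, max_le hs hT.le⟩
  have hYlip : ∀ s, s ≤ ϑ → ∀ s', s' ≤ ϑ → ‖Y s - Y s'‖ ≤ L * |s - s'| := by
    intro s hs s' hs'
    rw [hYdef]
    exact (hyL _ (hmem s hs) _ (hmem s' hs')).trans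
      (mul_le_mul_of_nonneg_left (abs_max_sub_max_le_abs s s' t0) hL.le)
  have hY0 : ∀ s, s ≤ t0 → Y s = 0 := by
    intro s hs
    simp only [hYdef]
    rw [max_eq_right hs, hy0]
  -- extension lemma
  have hext : ∀ t ∈ Icc t0 ϑ, ∀ m : ℕ, ⌊(t - t0) / h⌋₊ < m →
      glDiff t0 α h y t
        = ∑ i ∈ Finset.range m, ((-1:ℝ) ^ i * glCoef (1 - α) i) • Y (t - (i:ℝ) * h) := by
    intro t ht m hm
    have ht0 : (0:ℝ) ≤ t - t0 := sub_nonneg.mpr ht.1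
    have hfl : (⌊(t - t0) / h⌋₊ : ℝ) * h ≤ t - t0 := by
      have h1 : (⌊(t - t0) / h⌋₊ : ℝ) ≤ (t - t0) / h := Nat.floor_le (div_nonneg ht0 hh.le)
      calc (⌊(t - t0) / h⌋₊ : ℝ) * h ≤ ((t - t0) / h) * h := by nlinarith
        _ = t - t0 := by field_simp
    have hfl2 : t - t0 < ((⌊(t - t0) / h⌋₊ : ℝ) + 1) * h := by
      have h1 : (t - t0) / h < (⌊(t - t0) / h⌋₊ : ℝ) + 1 := Nat.lt_floor_add_one _
      calc t - t0 = ((t - t0) / h) * h := by field_simp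
        _ < _ := by nlinarith
    simp only [glDiff]
    have e1 : ∀ i ∈ Finset.range (⌊(t - t0) / h⌋₊ + 1),
        ((-1:ℝ) ^ i * glCoef (1 - α) i) • y (t - (i:ℝ) * h)
          = ((-1:ℝ) ^ i * glCoef (1 - α) i) • Y (t - (i:ℝ) * h) := by
      intro i hi
      have hi' : (i : ℝ) ≤ (⌊(t - t0) / h⌋₊ : ℝ) := by
        exact_mod_cast Nat.lt_succ_iff.mp (Finset.mem_range.mp hi)
      have hge : t0 ≤ t - (i:ℝ) * h := by nlinarith
      simp only [hYdef]
      rw [max_eq_left hge]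
    rw [Finset.sum_congr rfl e1]
    refine Finset.sum_subset (Finset.range_subset_range.mpr hm) ?_
    intro i _ hi2
    have hi3 : ⌊(t - t0) / h⌋₊ + 1 ≤ i := by
      by_contra hcon
      exact hi2 (Finset.mem_range.mpr (by omega))
    have hle : t - (i:ℝ) * h ≤ t0 := by
      have hc : ((⌊(t - t0) / h⌋₊ : ℝ) + 1) ≤ (i:ℝ) := by exact_mod_cast hi3
      nlinarith
    rw [hY0 _ hle, smul_zero]
  -- representation lemma
  have hrep : ∀ t ∈ Icc t0 ϑ, ∀ m : ℕ, ⌊(t - t0) / h⌋₊ < m →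
      glDiff t0 α h y t
        = ∑ k ∈ Finset.range m, GLB.Sca α k • (Y (t - (k:ℝ) * h) - Y (t - ((k:ℝ) + 1) * h)) := by
    intro t ht m hm
    have h1 := hext t ht (m + 1) (hm.trans (Nat.lt_succ_self m))
    have h3 := GLB.abel_sum α (fun i : ℕ => Y (t - (i:ℝ) * h)) m
    simp only [Nat.cast_add, Nat.cast_one] at h3
    have hYm : Y (t - (m:ℝ) * h) = 0 := by
      apply hY0
      have hfl2 : t - t0 < ((⌊(t - t0) / h⌋₊ : ℝ) + 1) * h := by
        have h4 : (t - t0) / h < (⌊(t - t0) / h⌋₊ : ℝ) + 1 := Nat.lt_floor_add_one _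
        calc t - t0 = ((t - t0) / h) * h := by field_simp
          _ < _ := by nlinarith
      have hc : ((⌊(t - t0) / h⌋₊ : ℝ) + 1) ≤ (m:ℝ) := by exact_mod_cast hm
      nlinarith
    rw [h1, h3, hYm, smul_zero, add_zero]
  -- norm bound for steps
  have hDle : ∀ t ∈ Icc t0 ϑ, ∀ k : ℕ,
      ‖Y (t - (k:ℝ) * h) - Y (t - ((k:ℝ) + 1) * h)‖
        ≤ L * (max (t - (k:ℝ) * h) t0 - max (t - ((k:ℝ) + 1) * h) t0) := by
    intro t ht k
    have hk0 : (0:ℝ) ≤ (k:ℝ) := Nat.cast_nonneg k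
    have h1 : t - (k:ℝ) * h ≤ ϑ := by nlinarith [ht.2]
    have h2 : t - ((k:ℝ) + 1) * h ≤ ϑ := by nlinarith [ht.2]
    have h5 : ‖Y (t - (k:ℝ) * h) - Y (t - ((k:ℝ) + 1) * h)‖
        ≤ L * |max (t - (k:ℝ) * h) t0 - max (t - ((k:ℝ) + 1) * h) t0| := by
      rw [hYdef]
      exact hyL _ (hmem _ h1) _ (hmem _ h2)
    have h6 : max (t - ((k:ℝ) + 1) * h) t0 ≤ max (t - (k:ℝ) * h) t0 := by
      apply max_le_max _ le_rfl
      nlinarith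
    calc ‖Y (t - (k:ℝ) * h) - Y (t - ((k:ℝ) + 1) * h)‖
        ≤ L * |max (t - (k:ℝ) * h) t0 - max (t - ((k:ℝ) + 1) * h) t0| := h5
      _ = L * (max (t - (k:ℝ) * h) t0 - max (t - ((k:ℝ) + 1) * h) t0) := by
          rw [abs_of_nonneg (sub_nonneg.mpr h6)]
  have hDh : ∀ t ∈ Icc t0 ϑ, ∀ k : ℕ,
      ‖Y (t - (k:ℝ) * h) - Y (t - ((k:ℝ) + 1) * h)‖ ≤ L * h := by
    intro t ht k
    have hk0 : (0:ℝ) ≤ (k:ℝ) := Nat.cast_nonneg k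
    have h1 : t - (k:ℝ) * h ≤ ϑ := by nlinarith [ht.2]
    have h2 : t - ((k:ℝ) + 1) * h ≤ ϑ := by nlinarith [ht.2]
    have h5 := hYlip _ h1 _ h2
    have h7 : |t - (k:ℝ) * h - (t - ((k:ℝ) + 1) * h)| = h := by
      rw [show t - (k:ℝ) * h - (t - ((k:ℝ) + 1) * h) = h by ring, abs_of_pos hh]
    rw [h7] at h5
    exact h5
  -- the T1-type bound
  have hT1bd : ∀ d : ℕ, (d:ℝ) * h ≤ ϑ - t0 →
      h ^ (α - 1) * (∑ k ∈ Finset.range d, GLB.Sca α k * (L * h)) ≤ L * ((d:ℝ) * h) ^ α / α := by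
    intro d _
    have hws := GLB.weighted_sum_le hα0 hα1 hh (fun _ => h) (fun _ => hh.le) (fun _ => le_rfl) d
    simp only [Finset.sum_const, Finset.card_range, nsmul_eq_mul] at hws
    have hcomp : ∑ k ∈ Finset.range d, GLB.Sca α k * (L * h)
        ≤ L * ∑ k ∈ Finset.range d, ((k:ℝ) + 1) ^ (α - 1) * h := by
      rw [Finset.mul_sum]
      refine Finset.sum_le_sum fun k _ => ?_
      have := GLB.Sca_le_rpow hα0 hα1 k
      have hLh : (0:ℝ) ≤ L * h := by positivity
      calc GLB.Sca α k * (L * h) ≤ ((k:ℝ) + 1) ^ (α - 1) * (L * h) :=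
            mul_le_mul_of_nonneg_right this hLh
        _ = L * (((k:ℝ) + 1) ^ (α - 1) * h) := by ring
    calc h ^ (α - 1) * (∑ k ∈ Finset.range d, GLB.Sca α k * (L * h))
        ≤ h ^ (α - 1) * (L * ∑ k ∈ Finset.range d, ((k:ℝ) + 1) ^ (α - 1) * h) :=
          mul_le_mul_of_nonneg_left hcomp hhp.le
      _ = L * (h ^ (α - 1) * ∑ k ∈ Finset.range d, ((k:ℝ) + 1) ^ (α - 1) * h) := by ring
      _ ≤ L * (((d:ℝ) * h) ^ α / α) := mul_le_mul_of_nonneg_left hws hL.le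
      _ = L * ((d:ℝ) * h) ^ α / α := by ring
  -- Part 1: uniform bound
  have hmain : ∀ t ∈ Icc t0 ϑ, ‖(h ^ (α - 1)) • glDiff t0 α h y t‖ ≤ L * (ϑ - t0) ^ α / α := by
    intro t ht
    have ht0 : (0:ℝ) ≤ t - t0 := sub_nonneg.mpr ht.1
    set N := ⌊(t - t0) / h⌋₊ with hN
    rw [hrep t ht (N + 1) (Nat.lt_succ_self N), norm_smul, Real.norm_eq_abs, abs_of_pos hhp]
    set Δ : ℕ → ℝ := fun k => max (t - (k:ℝ) * h) t0 - max (t - ((k:ℝ) + 1) * h) t0 with hΔ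
    have hΔ0 : ∀ k, 0 ≤ Δ k := by
      intro k
      have : max (t - ((k:ℝ) + 1) * h) t0 ≤ max (t - (k:ℝ) * h) t0 := by
        apply max_le_max _ le_rfl
        nlinarith [(Nat.cast_nonneg k : (0:ℝ) ≤ (k:ℝ)), hh.le]
      simpa [hΔ] using sub_nonneg.mpr this
    have hΔh : ∀ k, Δ k ≤ h := by
      intro k
      have h1 : max (t - (k:ℝ) * h) t0 ≤ max (t - ((k:ℝ) + 1) * h) t0 + h := by
        apply max_le
        · have : t - (k:ℝ) * h = (t - ((k:ℝ) + 1) * h) + h := by ring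
          rw [this]
          exact add_le_add_left (le_max_left _ _) h
        · linarith [le_max_right (t - ((k:ℝ) + 1) * h) t0, hh]
      simp only [hΔ]
      linarith
    have hsum : ∑ k ∈ Finset.range (N + 1), Δ k = t - t0 := by
      have e1 : ∀ k, Δ k = (fun j : ℕ => max (t - (j:ℝ) * h) t0) k
          - (fun j : ℕ => max (t - (j:ℝ) * h) t0) (k + 1) := by
        intro k
        simp only [hΔ]
        push_cast
        ring_nf
      rw [Finset.sum_congr rfl fun k _ => e1 k, Finset.sum_range_sub']
      have e2 : max (t - (0:ℕ) * h) t0 = t := by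
        simp [max_eq_left ht.1]
      have e3 : max (t - ((N + 1 : ℕ):ℝ) * h) t0 = t0 := by
        apply max_eq_right
        have hfl2 : t - t0 < ((N:ℝ) + 1) * h := by
          have h4 : (t - t0) / h < (N:ℝ) + 1 := Nat.lt_floor_add_one _
          calc t - t0 = ((t - t0) / h) * h := by field_simp
            _ < _ := by nlinarith
        push_cast
        linarith
      rw [e2, e3]
    have hnorm : ‖∑ k ∈ Finset.range (N + 1),
        GLB.Sca α k • (Y (t - (k:ℝ) * h) - Y (t - ((k:ℝ) + 1) * h))‖
        ≤ ∑ k ∈ Finset.range (N + 1), GLB.Sca α k * (L * Δ k) := by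
      refine (norm_sum_le _ _).trans (Finset.sum_le_sum fun k _ => ?_)
      rw [norm_smul, Real.norm_eq_abs, abs_of_pos (GLB.Sca_pos hα0 k)]
      exact mul_le_mul_of_nonneg_left (hDle t ht k) (GLB.Sca_pos hα0 k).le
    have hws := GLB.weighted_sum_le hα0 hα1 hh Δ hΔ0 hΔh (N + 1)
    rw [hsum] at hws
    have hcomp : ∑ k ∈ Finset.range (N + 1), GLB.Sca α k * (L * Δ k)
        ≤ L * ∑ k ∈ Finset.range (N + 1), ((k:ℝ) + 1) ^ (α - 1) * Δ k := by
      rw [Finset.mul_sum]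
      refine Finset.sum_le_sum fun k _ => ?_
      have h8 := GLB.Sca_le_rpow hα0 hα1 k
      have h9 : (0:ℝ) ≤ L * Δ k := mul_nonneg hL.le (hΔ0 k)
      calc GLB.Sca α k * (L * Δ k) ≤ ((k:ℝ) + 1) ^ (α - 1) * (L * Δ k) :=
            mul_le_mul_of_nonneg_right h8 h9
        _ = L * (((k:ℝ) + 1) ^ (α - 1) * Δ k) := by ring
    calc h ^ (α - 1) * ‖∑ k ∈ Finset.range (N + 1),
          GLB.Sca α k • (Y (t - (k:ℝ) * h) - Y (t - ((k:ℝ) + 1) * h))‖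
        ≤ h ^ (α - 1) * (L * ∑ k ∈ Finset.range (N + 1), ((k:ℝ) + 1) ^ (α - 1) * Δ k) :=
          mul_le_mul_of_nonneg_left (hnorm.trans hcomp) hhp.le
      _ = L * (h ^ (α - 1) * ∑ k ∈ Finset.range (N + 1), ((k:ℝ) + 1) ^ (α - 1) * Δ k) := by ring
      _ ≤ L * ((t - t0) ^ α / α) := mul_le_mul_of_nonneg_left hws hL.le
      _ ≤ L * ((ϑ - t0) ^ α / α) := by
          have h10 : (t - t0) ^ α ≤ (ϑ - t0) ^ α :=
            Real.rpow_le_rpow ht0 (by linarith [ht.2]) hα0.le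
          exact mul_le_mul_of_nonneg_left (by gcongr) hL.le
      _ = L * (ϑ - t0) ^ α / α := by ring
  -- Part 2: Hölder bound (one-sided)
  have hhold : ∀ t ∈ Icc t0 ϑ, ∀ t' ∈ Icc t0 ϑ, t' ≤ t →
      ‖(h ^ (α - 1)) • glDiff t0 α h y t - (h ^ (α - 1)) • glDiff t0 α h y t'‖
        ≤ L * (2 / α + 3) * (t - t') ^ α := by
    intro t ht t' ht' htt
    rcases eq_or_lt_of_le htt with heq | hlt
    · rw [heq]
      simp [Real.zero_rpow hα0.ne']
    · have hδ : (0:ℝ) < t - t' := sub_pos.mpr hlt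
      rw [← smul_sub, norm_smul, Real.norm_eq_abs, abs_of_pos hhp]
      set N := ⌊(t - t0) / h⌋₊ with hN
      set N' := ⌊(t' - t0) / h⌋₊ with hN'
      have hNN' : N' ≤ N := Nat.floor_le_floor (by gcongr <;> linarith)
      have hfloorleN : (N:ℝ) ≤ (t - t0) / h := Nat.floor_le (div_nonneg (by linarith [ht.1]) hh.le)
      rcases le_or_gt (t - t') h with hcase | hcase
      · -- small increments
        rw [hext t ht (N + 1) (Nat.lt_succ_self N),
          hext t' ht' (N + 1) (Nat.lt_succ_of_le hNN'), ← Finset.sum_sub_distrib]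
        have hterm : ∀ i ∈ Finset.range (N + 1),
            ((-1:ℝ) ^ i * glCoef (1 - α) i) • Y (t - (i:ℝ) * h)
              - ((-1:ℝ) ^ i * glCoef (1 - α) i) • Y (t' - (i:ℝ) * h)
            = ((-1:ℝ) ^ i * glCoef (1 - α) i) • (Y (t - (i:ℝ) * h) - Y (t' - (i:ℝ) * h)) := by
          intro i _
          rw [smul_sub]
        rw [Finset.sum_congr rfl hterm]
        have hbd : ‖∑ i ∈ Finset.range (N + 1),
            ((-1:ℝ) ^ i * glCoef (1 - α) i) • (Y (t - (i:ℝ) * h) - Y (t' - (i:ℝ) * h))‖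
            ≤ 2 * (L * (t - t')) := by
          refine (norm_sum_le _ _).trans ?_
          have hab : ∀ i ∈ Finset.range (N + 1),
              ‖((-1:ℝ) ^ i * glCoef (1 - α) i) • (Y (t - (i:ℝ) * h) - Y (t' - (i:ℝ) * h))‖
                ≤ |(-1:ℝ) ^ i * glCoef (1 - α) i| * (L * (t - t')) := by
            intro i _
            rw [norm_smul, Real.norm_eq_abs]
            refine mul_le_mul_of_nonneg_left ?_ (abs_nonneg _)
            have hk0 : (0:ℝ) ≤ (i:ℝ) := Nat.cast_nonneg i
            have h1 : t - (i:ℝ) * h ≤ ϑ := by nlinarith [ht.2]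
            have h2 : t' - (i:ℝ) * h ≤ ϑ := by nlinarith [ht'.2]
            have h5 := hYlip _ h1 _ h2
            have h7 : |t - (i:ℝ) * h - (t' - (i:ℝ) * h)| = t - t' := by
              rw [show t - (i:ℝ) * h - (t' - (i:ℝ) * h) = t - t' by ring, abs_of_pos hδ]
            rwa [h7] at h5
          refine (Finset.sum_le_sum hab).trans ?_
          rw [← Finset.sum_mul]
          exact mul_le_mul_of_nonneg_right (GLB.sum_absA_le hα0 hα1.le N)
            (by positivity)
        have hpow : h ^ (α - 1) * (t - t') ≤ (t - t') ^ α := by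
          have h1 : h ^ (α - 1) ≤ (t - t') ^ (α - 1) :=
            Real.rpow_le_rpow_of_nonpos hδ hcase (by linarith)
          have h2 : (t - t') ^ (α - 1) * (t - t') = (t - t') ^ α := by
            nth_rewrite 2 [← Real.rpow_one (t - t')]
            rw [← Real.rpow_add hδ]
            ring_nf
          calc h ^ (α - 1) * (t - t') ≤ (t - t') ^ (α - 1) * (t - t') :=
                mul_le_mul_of_nonneg_right h1 hδ.le
            _ = (t - t') ^ α := h2
        calc h ^ (α - 1) * ‖∑ i ∈ Finset.range (N + 1),
              ((-1:ℝ) ^ i * glCoef (1 - α) i) • (Y (t - (i:ℝ) * h) - Y (t' - (i:ℝ) * h))‖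
            ≤ h ^ (α - 1) * (2 * (L * (t - t'))) := mul_le_mul_of_nonneg_left hbd hhp.le
          _ = 2 * L * (h ^ (α - 1) * (t - t')) := by ring
          _ ≤ 2 * L * (t - t') ^ α := mul_le_mul_of_nonneg_left hpow (by positivity)
          _ ≤ L * (2 / α + 3) * (t - t') ^ α := by
              have hp : (0:ℝ) ≤ (t - t') ^ α := Real.rpow_nonneg hδ.le α
              have h2a : (0:ℝ) < 2 / α := by positivity
              nlinarith [mul_nonneg (mul_nonneg hL.le hp) h2a.le, mul_nonneg hL.le hp]
      · -- large increments
        obtain ⟨d, hd⟩ : ∃ d : ℕ, d = ⌊(t - t') / h⌋₊ := ⟨_, rfl⟩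
        have hd1 : 1 ≤ d := by
          rw [hd]
          apply Nat.le_floor
          rw [Nat.cast_one, le_div_iff₀ hh]
          linarith
        have hdle : (d:ℝ) * h ≤ t - t' := by
          have h1 : (d:ℝ) ≤ (t - t') / h := by
            rw [hd]; exact Nat.floor_le (div_nonneg hδ.le hh.le)
          calc (d:ℝ) * h ≤ ((t - t') / h) * h := by nlinarith
            _ = t - t' := by field_simp
        have hdlt : t - t' < ((d:ℝ) + 1) * h := by
          have h1 : (t - t') / h < (d:ℝ) + 1 := by
            rw [hd]; exact Nat.lt_floor_add_one _
          calc t - t' = ((t - t') / h) * h := by field_simp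
            _ < _ := by nlinarith
        obtain ⟨ρ, hρ⟩ : ∃ ρ : ℝ, ρ = (t - t') - (d:ℝ) * h := ⟨_, rfl⟩
        have hρ0 : 0 ≤ ρ := by rw [hρ]; linarith
        have hρh : ρ ≤ h := by rw [hρ]; nlinarith
        have hdN : d ≤ N := by
          rw [hd, hN]
          exact Nat.floor_le_floor (by gcongr <;> linarith [ht'.1])
        have hN'd : N' + d ≤ N := by
          rw [hN]
          apply Nat.le_floor
          push_cast
          have h1 : (N':ℝ) ≤ (t' - t0) / h := by
            rw [hN']; exact Nat.floor_le (div_nonneg (by linarith [ht'.1]) hh.le)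
          have h2 : (d:ℝ) ≤ (t - t') / h := by
            rw [hd]; exact Nat.floor_le (div_nonneg hδ.le hh.le)
          have h3 : (t' - t0) / h + (t - t') / h = (t - t0) / h := by
            field_simp
            ring
          linarith
        obtain ⟨m, hm⟩ : ∃ m : ℕ, m = N + 2 - d := ⟨_, rfl⟩
        have hdm : N + 2 = d + m := by omega
        have hN'm : N' < m := by omega
        have hrt := hrep t ht (N + 2) (by omega)
        have hrt' := hrep t' ht' m hN'm
        have hEQ : glDiff t0 α h y t - glDiff t0 α h y t'
            = (∑ k ∈ Finset.range d, GLB.Sca α k • (Y (t - (k:ℝ) * h) - Y (t - ((k:ℝ) + 1) * h)))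
              + (∑ x ∈ Finset.range m, (GLB.Sca α (d + x) - GLB.Sca α x)
                  • (Y (t - ((d + x : ℕ):ℝ) * h) - Y (t - (((d + x : ℕ):ℝ) + 1) * h)))
              + (∑ x ∈ Finset.range m, GLB.Sca α x
                  • ((Y (t - ((d + x : ℕ):ℝ) * h) - Y (t - (((d + x : ℕ):ℝ) + 1) * h))
                    - (Y (t' - (x:ℝ) * h) - Y (t' - ((x:ℝ) + 1) * h)))) := by
          rw [hrt, hrt', hdm, Finset.sum_range_add, add_sub_assoc, add_assoc,
            ← Finset.sum_sub_distrib, ← Finset.sum_add_distrib]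
          congr 1
          refine Finset.sum_congr rfl fun x _ => ?_
          simp only [sub_smul, smul_sub]
          abel
        -- bound for the first sum
        have hb1 : ‖∑ k ∈ Finset.range d, GLB.Sca α k • (Y (t - (k:ℝ) * h) - Y (t - ((k:ℝ) + 1) * h))‖
            ≤ ∑ k ∈ Finset.range d, GLB.Sca α k * (L * h) := by
          refine (norm_sum_le _ _).trans (Finset.sum_le_sum fun k _ => ?_)
          rw [norm_smul, Real.norm_eq_abs, abs_of_pos (GLB.Sca_pos hα0 k)]
          exact mul_le_mul_of_nonneg_left (hDh t ht k) (GLB.Sca_pos hα0 k).le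
        -- bound for the second sum
        have hb2 : ‖∑ x ∈ Finset.range m, (GLB.Sca α (d + x) - GLB.Sca α x)
              • (Y (t - ((d + x : ℕ):ℝ) * h) - Y (t - (((d + x : ℕ):ℝ) + 1) * h))‖
            ≤ ∑ k ∈ Finset.range d, GLB.Sca α k * (L * h) := by
          refine (norm_sum_le _ _).trans ?_
          have hstep : ∀ x ∈ Finset.range m,
              ‖(GLB.Sca α (d + x) - GLB.Sca α x)
                • (Y (t - ((d + x : ℕ):ℝ) * h) - Y (t - (((d + x : ℕ):ℝ) + 1) * h))‖
              ≤ (GLB.Sca α x - GLB.Sca α (d + x)) * (L * h) := by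
            intro x _
            have hmono : GLB.Sca α (d + x) ≤ GLB.Sca α x :=
              GLB.Sca_anti hα0 hα1.le (Nat.le_add_left x d)
            rw [norm_smul, Real.norm_eq_abs, abs_sub_comm,
              abs_of_nonneg (sub_nonneg.mpr hmono)]
            exact mul_le_mul_of_nonneg_left (hDh t ht (d + x)) (sub_nonneg.mpr hmono)
          refine (Finset.sum_le_sum hstep).trans ?_
          rw [← Finset.sum_mul, ← Finset.sum_mul]
          refine mul_le_mul_of_nonneg_right ?_ (by positivity)
          have e1 : ∑ x ∈ Finset.range m, GLB.Sca α (d + x)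
              = (∑ k ∈ Finset.range (d + m), GLB.Sca α k) - ∑ k ∈ Finset.range d, GLB.Sca α k := by
            rw [Finset.sum_range_add]; ring
          rw [Finset.sum_sub_distrib, e1]
          have e2 : ∑ x ∈ Finset.range m, GLB.Sca α x ≤ ∑ k ∈ Finset.range (d + m), GLB.Sca α k := by
            refine Finset.sum_le_sum_of_subset_of_nonneg
              (Finset.range_subset_range.mpr (by omega)) ?_
            intro k _ _
            exact (GLB.Sca_pos hα0 k).le
          linarith
        -- bound for the third sum
        obtain ⟨g, hg⟩ : ∃ g : ℕ → Evec n,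
            g = fun j : ℕ => Y (t - (j:ℝ) * h) - Y (t - (j:ℝ) * h - ρ) := ⟨_, rfl⟩
        have hgbd : ∀ j : ℕ, ‖g j‖ ≤ L * ρ := by
          intro j
          have hj0 : (0:ℝ) ≤ (j:ℝ) := Nat.cast_nonneg j
          have hjh : (0:ℝ) ≤ (j:ℝ) * h := mul_nonneg hj0 hh.le
          have h1 : t - (j:ℝ) * h ≤ ϑ := by linarith [ht.2]
          have h2 : t - (j:ℝ) * h - ρ ≤ ϑ := by linarith [ht.2]
          have h5 := hYlip _ h1 _ h2
          rw [show t - (j:ℝ) * h - (t - (j:ℝ) * h - ρ) = ρ by ring,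
            abs_of_nonneg hρ0] at h5
          simpa only [hg] using h5
        have hid : ∀ x : ℕ,
            (Y (t - ((d + x : ℕ):ℝ) * h) - Y (t - (((d + x : ℕ):ℝ) + 1) * h))
              - (Y (t' - (x:ℝ) * h) - Y (t' - ((x:ℝ) + 1) * h))
            = g (d + x) - g (d + x + 1) := by
          intro x
          have e3 : ((d + x : ℕ):ℝ) = (d:ℝ) + (x:ℝ) := by push_cast; ring
          have e4 : ((d + x + 1 : ℕ):ℝ) = (d:ℝ) + (x:ℝ) + 1 := by push_cast; ring
          have e1 : t' - (x:ℝ) * h = t - ((d:ℝ) + (x:ℝ)) * h - ρ := by rw [hρ]; ring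
          have e2 : t' - ((x:ℝ) + 1) * h = t - ((d:ℝ) + (x:ℝ) + 1) * h - ρ := by rw [hρ]; ring
          have e5 : t - ((d:ℝ) + (x:ℝ) + 1) * h = t - ((d:ℝ) + (x:ℝ) + 1) * h := rfl
          simp only [hg, e3, e4, e1, e2]
          abel
        have hT3eq : (∑ x ∈ Finset.range m, GLB.Sca α x
              • ((Y (t - ((d + x : ℕ):ℝ) * h) - Y (t - (((d + x : ℕ):ℝ) + 1) * h))
                - (Y (t' - (x:ℝ) * h) - Y (t' - ((x:ℝ) + 1) * h))))
            = (∑ i ∈ Finset.range (m + 1), ((-1:ℝ) ^ i * glCoef (1 - α) i) • g (d + i))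
              - GLB.Sca α m • g (d + m) := by
          have hc : ∀ x ∈ Finset.range m, GLB.Sca α x
              • ((Y (t - ((d + x : ℕ):ℝ) * h) - Y (t - (((d + x : ℕ):ℝ) + 1) * h))
                - (Y (t' - (x:ℝ) * h) - Y (t' - ((x:ℝ) + 1) * h)))
              = GLB.Sca α x • (g (d + x) - g (d + x + 1)) := by
            intro x _
            rw [hid x]
          rw [Finset.sum_congr rfl hc, eq_sub_iff_add_eq]
          have h3 := GLB.abel_sum α (fun i : ℕ => g (d + i)) m
          simp only [← add_assoc] at h3
          exact h3.symm
        have hb3 : ‖∑ x ∈ Finset.range m, GLB.Sca α x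
              • ((Y (t - ((d + x : ℕ):ℝ) * h) - Y (t - (((d + x : ℕ):ℝ) + 1) * h))
                - (Y (t' - (x:ℝ) * h) - Y (t' - ((x:ℝ) + 1) * h)))‖
            ≤ 3 * (L * ρ) := by
          rw [hT3eq]
          have hLρ : (0:ℝ) ≤ L * ρ := mul_nonneg hL.le hρ0
          have hA : ‖∑ i ∈ Finset.range (m + 1), ((-1:ℝ) ^ i * glCoef (1 - α) i) • g (d + i)‖
              ≤ 2 * (L * ρ) := by
            refine (norm_sum_le _ _).trans ?_
            have hterm : ∀ i ∈ Finset.range (m + 1),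
                ‖((-1:ℝ) ^ i * glCoef (1 - α) i) • g (d + i)‖
                ≤ |(-1:ℝ) ^ i * glCoef (1 - α) i| * (L * ρ) := by
              intro i _
              rw [norm_smul, Real.norm_eq_abs]
              exact mul_le_mul_of_nonneg_left (hgbd (d + i)) (abs_nonneg _)
            refine (Finset.sum_le_sum hterm).trans ?_
            rw [← Finset.sum_mul]
            exact mul_le_mul_of_nonneg_right (GLB.sum_absA_le hα0 hα1.le m) hLρ
          have hB : ‖GLB.Sca α m • g (d + m)‖ ≤ L * ρ := by
            rw [norm_smul, Real.norm_eq_abs, abs_of_pos (GLB.Sca_pos hα0 m)]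
            calc GLB.Sca α m * ‖g (d + m)‖ ≤ 1 * (L * ρ) :=
                  mul_le_mul (GLB.Sca_le_one hα0 hα1.le m) (hgbd (d + m)) (norm_nonneg _)
                    one_pos.le
              _ = L * ρ := one_mul _
          calc ‖(∑ i ∈ Finset.range (m + 1), ((-1:ℝ) ^ i * glCoef (1 - α) i) • g (d + i))
                - GLB.Sca α m • g (d + m)‖
              ≤ ‖∑ i ∈ Finset.range (m + 1), ((-1:ℝ) ^ i * glCoef (1 - α) i) • g (d + i)‖
                + ‖GLB.Sca α m • g (d + m)‖ := norm_sub_le _ _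
            _ ≤ 2 * (L * ρ) + L * ρ := add_le_add hA hB
            _ = 3 * (L * ρ) := by ring
        -- assemble
        have hdh' : (d:ℝ) * h ≤ ϑ - t0 := by linarith [ht.2, ht'.1, hdle]
        have hT1 := hT1bd d hdh'
        have hdα : L * ((d:ℝ) * h) ^ α / α ≤ L * (t - t') ^ α / α := by
          have h9 : ((d:ℝ) * h) ^ α ≤ (t - t') ^ α :=
            Real.rpow_le_rpow (by positivity) hdle hα0.le
          gcongr
        have hhρ : h ^ (α - 1) * ρ ≤ (t - t') ^ α := by
          have h1 : h ^ (α - 1) * ρ ≤ h ^ (α - 1) * h := mul_le_mul_of_nonneg_left hρh hhp.le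
          have h2 : h ^ (α - 1) * h = h ^ α := by
            nth_rewrite 2 [← Real.rpow_one h]
            rw [← Real.rpow_add hh]
            norm_num
          have h3 : h ^ α ≤ (t - t') ^ α := Real.rpow_le_rpow hh.le hcase.le hα0.le
          linarith
        rw [hEQ]
        set S := ∑ k ∈ Finset.range d, GLB.Sca α k * (L * h) with hS
        calc h ^ (α - 1) * ‖(∑ k ∈ Finset.range d, GLB.Sca α k • (Y (t - (k:ℝ) * h) - Y (t - ((k:ℝ) + 1) * h)))
              + (∑ x ∈ Finset.range m, (GLB.Sca α (d + x) - GLB.Sca α x)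
                  • (Y (t - ((d + x : ℕ):ℝ) * h) - Y (t - (((d + x : ℕ):ℝ) + 1) * h)))
              + (∑ x ∈ Finset.range m, GLB.Sca α x
                  • ((Y (t - ((d + x : ℕ):ℝ) * h) - Y (t - (((d + x : ℕ):ℝ) + 1) * h))
                    - (Y (t' - (x:ℝ) * h) - Y (t' - ((x:ℝ) + 1) * h))))‖
            ≤ h ^ (α - 1) * (S + S + 3 * (L * ρ)) := by
              refine mul_le_mul_of_nonneg_left ((norm_add₃_le).trans ?_) hhp.le
              exact add_le_add (add_le_add hb1 hb2) hb3
          _ = (h ^ (α - 1) * S) + (h ^ (α - 1) * S) + 3 * L * (h ^ (α - 1) * ρ) := by ring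
          _ ≤ (L * ((d:ℝ) * h) ^ α / α) + (L * ((d:ℝ) * h) ^ α / α) + 3 * L * (t - t') ^ α := by
              refine add_le_add (add_le_add hT1 hT1) ?_
              exact mul_le_mul_of_nonneg_left hhρ (by positivity)
          _ ≤ (L * (t - t') ^ α / α) + (L * (t - t') ^ α / α) + 3 * L * (t - t') ^ α :=
              add_le_add (add_le_add hdα hdα) le_rfl
          _ = L * (2 / α + 3) * (t - t') ^ α := by
              field_simp
              ring
  -- conclusion
  intro t ht
  refine ⟨hmain t ht, ?_⟩
  intro t' ht'
  rcases le_total t' t with hle | hle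
  · rw [abs_of_nonneg (sub_nonneg.mpr hle)]
    exact hhold t ht t' ht' hle
  · rw [norm_sub_rev, abs_sub_comm, abs_of_nonneg (sub_nonneg.mpr hle)]
    exact hhold t' ht' t ht hle


end
end

section
/- Assume (A.2) and (A.3), and fix R0 > 0. Then for every h > 0 there exists c_h > 0 such that ‖f(t, w0 + h^{α−1}(Δ_h^{1−α} r)(t), p, q)‖ ≤ (1 + max_{τ∈[t0,t]} ‖r(τ)‖)·c_h for all w0 ∈ ℝ^n with ‖w0‖ ≤ R0, all t ∈ [t0,ϑ], all Lipschitz continuous r : [t0,t] → ℝ^n with r(t0) = 0, and all p ∈ U, q ∈ V. Moreover, for every h > 0 and every R ≥ 0 there exists λ_h > 0 such that ‖f(t, w0 + h^{α−1}(Δ_h^{1−α} r)(t), p, q) − f(t, w0 + h^{α−1}(Δ_h^{1−α} r′)(t), p, q)‖ ≤ λ_h·max_{τ∈[t0,t]} ‖r(τ) − r′(τ)‖ for all such w0, t, p, q and all Lipschitz continuous r, r′ : [t0,t] → ℝ^n vanishing at t0 with max_{[t0,t]}‖r‖ ≤ R and max_{[t0,t]}‖r′‖ ≤ R. -/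
open MeasureTheory Set
open scoped RealInnerProductSpace NNReal

noncomputable section

/-- A Lipschitz function on `[t0, t]` has norm bounded on `[t0, t]`. -/
lemma norm_bound_of_lip {n : ℕ} {t0 t : ℝ} (ht : t0 ≤ t) {rr : ℝ → Evec n}
    (hK : ∃ K : ℝ≥0, LipschitzOnWith K rr (Icc t0 t)) :
    ∃ B : ℝ, ∀ τ ∈ Icc t0 t, ‖rr τ‖ ≤ B := by
  obtain ⟨K, hK⟩ := hK
  refine ⟨‖rr t0‖ + K * (t - t0), fun τ hτ => ?_⟩
  have h1 := hK.dist_le_mul τ hτ t0 (left_mem_Icc.mpr ht)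
  have h2 : dist τ t0 ≤ t - t0 := by
    rw [Real.dist_eq, abs_of_nonneg (sub_nonneg.mpr hτ.1)]
    linarith [hτ.2]
  have h3 : ‖rr τ‖ - ‖rr t0‖ ≤ dist (rr τ) (rr t0) := by
    rw [dist_eq_norm]; exact norm_sub_norm_le _ _
  have h4 : (K : ℝ) * dist τ t0 ≤ (K : ℝ) * (t - t0) :=
    mul_le_mul_of_nonneg_left h2 K.coe_nonneg
  linarith

lemma bddAbove_norm_image {n : ℕ} {t0 t : ℝ} {g : ℝ → Evec n} {B : ℝ}
    (hB : ∀ τ ∈ Icc t0 t, ‖g τ‖ ≤ B) : BddAbove ((fun τ => ‖g τ‖) '' Icc t0 t) :=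
  ⟨B, by rintro x ⟨τ, hτ, rfl⟩; exact hB τ hτ⟩

/-- Basic bound on the Grünwald–Letnikov difference. -/
lemma glDiff_norm_le {n : ℕ} (t0 α h t : ℝ) (ht0 : t0 ≤ t) (hh : 0 < h)
    (y : ℝ → Evec n) (M : ℝ) (hM : 0 ≤ M) (hy : ∀ τ ∈ Icc t0 t, ‖y τ‖ ≤ M) :
    ‖glDiff t0 α h y t‖
      ≤ (∑ i ∈ Finset.range (⌊(t - t0) / h⌋₊ + 1), |glCoef (1 - α) i|) * M := by
  rw [glDiff, Finset.sum_mul]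
  refine (norm_sum_le _ _).trans (Finset.sum_le_sum fun i hi => ?_)
  rw [norm_smul]
  have hmem : t - (i : ℝ) * h ∈ Icc t0 t := by
    have h1 : (i : ℝ) ≤ (⌊(t - t0) / h⌋₊ : ℝ) := by
      exact_mod_cast Nat.lt_succ_iff.mp (Finset.mem_range.mp hi)
    have h2 : (⌊(t - t0) / h⌋₊ : ℝ) ≤ (t - t0) / h :=
      Nat.floor_le (div_nonneg (sub_nonneg.mpr ht0) hh.le)
    have h3 : (i : ℝ) * h ≤ t - t0 := by
      have := mul_le_mul_of_nonneg_right (h1.trans h2) hh.le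
      rwa [div_mul_cancel₀ _ hh.ne'] at this
    have h4 : 0 ≤ (i : ℝ) * h := mul_nonneg (Nat.cast_nonneg _) hh.le
    constructor <;> linarith
  have hcoef : ‖(-1 : ℝ) ^ i * glCoef (1 - α) i‖ = |glCoef (1 - α) i| := by
    rw [Real.norm_eq_abs, abs_mul, abs_pow, abs_neg, abs_one, one_pow, one_mul]
  rw [hcoef]
  exact mul_le_mul_of_nonneg_left (hy _ hmem) (abs_nonneg _)

lemma glCoef_sum_mono {t0 ϑ α h t : ℝ} (ht0 : t0 ≤ t) (ht : t ≤ ϑ) (hh : 0 < h) :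
    (∑ i ∈ Finset.range (⌊(t - t0) / h⌋₊ + 1), |glCoef (1 - α) i|)
      ≤ ∑ i ∈ Finset.range (⌊(ϑ - t0) / h⌋₊ + 1), |glCoef (1 - α) i| := by
  refine Finset.sum_le_sum_of_subset_of_nonneg
    (Finset.range_subset_range.mpr (Nat.succ_le_succ (Nat.floor_mono ?_)))
    (fun i _ _ => abs_nonneg _)
  gcongr

lemma glCoef_sum_pos (α ϑ t0 h : ℝ) :
    (1 : ℝ) ≤ ∑ i ∈ Finset.range (⌊(ϑ - t0) / h⌋₊ + 1), |glCoef (1 - α) i| := by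
  have h0 : |glCoef (1 - α) 0| = 1 := by simp [glCoef]
  calc (1 : ℝ) = |glCoef (1 - α) 0| := h0.symm
    _ ≤ _ := Finset.single_le_sum (f := fun i => |glCoef (1 - α) i|) (fun i _ => abs_nonneg _) (Finset.mem_range.mpr (Nat.succ_pos _))

lemma glDiff_sub {n : ℕ} (t0 α h t : ℝ) (y y' : ℝ → Evec n) :
    glDiff t0 α h (fun τ => y τ - y' τ) t = glDiff t0 α h y t - glDiff t0 α h y' t := by
  simp [glDiff, smul_sub, Finset.sum_sub_distrib]

/-- conditions (B.2), (B.3): the right-hand side of the approximating system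
satisfies, uniformly in `‖w0‖ ≤ R0`, a sublinear bound with constant `c_h` and a Lipschitz
condition in the history with constant `λ_h`. -/
theorem approx_dynamics_conditions
    (t0 ϑ : ℝ) (hT : t0 < ϑ) (n : ℕ) (hn : 1 ≤ n) (α : ℝ) (hα : α ∈ Set.Ioo (0 : ℝ) 1)
    (r s : ℕ) (hr : 1 ≤ r) (hs : 1 ≤ s)
    (U : Set (Evec r)) (V : Set (Evec s)) (hUc : IsCompact U) (hUne : U.Nonempty)
    (hVc : IsCompact V) (hVne : V.Nonempty)
    (f : ℝ → Evec n → Evec r → Evec s → Evec n)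
    (hA2 : CondA2 t0 ϑ U V f) (c : ℝ) (hc : 0 < c) (hA3 : CondA3 t0 ϑ U V f c)
    (R0 : ℝ) (hR0 : 0 < R0) :
    (∀ h > (0 : ℝ), ∃ ch > (0 : ℝ), ∀ w0 : Evec n, ‖w0‖ ≤ R0 → ∀ t ∈ Icc t0 ϑ,
      ∀ rr : ℝ → Evec n, (∃ K : ℝ≥0, LipschitzOnWith K rr (Icc t0 t)) → rr t0 = 0 →
      ∀ p ∈ U, ∀ q ∈ V,
        ‖f t (approxState t0 α h w0 rr t) p q‖
          ≤ (1 + sSup ((fun τ => ‖rr τ‖) '' Icc t0 t)) * ch) ∧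
    (∀ h > (0 : ℝ), ∀ R : ℝ, 0 ≤ R → ∃ lamh > (0 : ℝ), ∀ w0 : Evec n, ‖w0‖ ≤ R0 →
      ∀ t ∈ Icc t0 ϑ, ∀ rr rr' : ℝ → Evec n,
      (∃ K : ℝ≥0, LipschitzOnWith K rr (Icc t0 t)) → rr t0 = 0 →
      (∃ K : ℝ≥0, LipschitzOnWith K rr' (Icc t0 t)) → rr' t0 = 0 →
      sSup ((fun τ => ‖rr τ‖) '' Icc t0 t) ≤ R →
      sSup ((fun τ => ‖rr' τ‖) '' Icc t0 t) ≤ R →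
      ∀ p ∈ U, ∀ q ∈ V,
        ‖f t (approxState t0 α h w0 rr t) p q - f t (approxState t0 α h w0 rr' t) p q‖
          ≤ lamh * sSup ((fun τ => ‖rr τ - rr' τ‖) '' Icc t0 t)) := by
  constructor
  · -- condition (B.2)
    intro h hh
    set S : ℝ := ∑ i ∈ Finset.range (⌊(ϑ - t0) / h⌋₊ + 1), |glCoef (1 - α) i| with hS
    have hS1 : (1 : ℝ) ≤ S := glCoef_sum_pos α ϑ t0 h
    have hpow : (0 : ℝ) < h ^ (α - 1) := Real.rpow_pos_of_pos hh _
    set C : ℝ := h ^ (α - 1) * S with hC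
    have hCpos : 0 < C := mul_pos hpow (by linarith)
    refine ⟨(1 + R0 + C) * c, by positivity, ?_⟩
    intro w0 hw0 t ht rr hLip hrr0 p hp q hq
    set M : ℝ := sSup ((fun τ => ‖rr τ‖) '' Icc t0 t) with hM
    obtain ⟨B, hB⟩ := norm_bound_of_lip ht.1 hLip
    have hbdd := bddAbove_norm_image hB
    have hle : ∀ τ ∈ Icc t0 t, ‖rr τ‖ ≤ M := fun τ hτ =>
      le_csSup hbdd ⟨τ, hτ, rfl⟩
    have hM0 : 0 ≤ M := le_trans (norm_nonneg (rr t0))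
      (hle t0 (left_mem_Icc.mpr ht.1))
    have hgl : ‖glDiff t0 α h rr t‖ ≤ S * M := by
      refine (glDiff_norm_le t0 α h t ht.1 hh rr M hM0 hle).trans ?_
      exact mul_le_mul_of_nonneg_right (glCoef_sum_mono ht.1 ht.2 hh) hM0
    have hstate : ‖approxState t0 α h w0 rr t‖ ≤ R0 + C * M := by
      rw [approxState]
      refine (norm_add_le _ _).trans ?_
      rw [norm_smul, Real.norm_eq_abs, abs_of_pos hpow]
      have := mul_le_mul_of_nonneg_left hgl hpow.le
      rw [hC]
      nlinarith
    have hf := hA3 t ht (approxState t0 α h w0 rr t) p hp q hq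
    refine hf.trans ?_
    have : 1 + ‖approxState t0 α h w0 rr t‖ ≤ (1 + M) * (1 + R0 + C) := by
      nlinarith [hCpos.le]
    exact mul_le_mul_of_nonneg_right this hc.le |>.trans_eq (by ring)
  · -- condition (B.3)
    intro h hh R hR
    set S : ℝ := ∑ i ∈ Finset.range (⌊(ϑ - t0) / h⌋₊ + 1), |glCoef (1 - α) i| with hS
    have hS1 : (1 : ℝ) ≤ S := glCoef_sum_pos α ϑ t0 h
    have hpow : (0 : ℝ) < h ^ (α - 1) := Real.rpow_pos_of_pos hh _
    set C : ℝ := h ^ (α - 1) * S with hC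
    have hCpos : 0 < C := mul_pos hpow (by linarith)
    obtain ⟨lam, hlam, hlip⟩ := hA2 (R0 + C * R) (by positivity)
    refine ⟨lam * C, mul_pos hlam hCpos, ?_⟩
    intro w0 hw0 t ht rr rr' hLip hrr0 hLip' hrr0' hRr hRr' p hp q hq
    obtain ⟨B, hB⟩ := norm_bound_of_lip ht.1 hLip
    obtain ⟨B', hB'⟩ := norm_bound_of_lip ht.1 hLip'
    have hbdd := bddAbove_norm_image hB
    have hbdd' := bddAbove_norm_image hB'
    have hle : ∀ τ ∈ Icc t0 t, ‖rr τ‖ ≤ sSup ((fun τ => ‖rr τ‖) '' Icc t0 t) :=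
      fun τ hτ => le_csSup hbdd ⟨τ, hτ, rfl⟩
    have hle' : ∀ τ ∈ Icc t0 t, ‖rr' τ‖ ≤ sSup ((fun τ => ‖rr' τ‖) '' Icc t0 t) :=
      fun τ hτ => le_csSup hbdd' ⟨τ, hτ, rfl⟩
    -- bound on the states
    have hstate : ∀ g : ℝ → Evec n, (∀ τ ∈ Icc t0 t, ‖g τ‖ ≤ R) →
        ‖approxState t0 α h w0 g t‖ ≤ R0 + C * R := by
      intro g hg
      have hgl : ‖glDiff t0 α h g t‖ ≤ S * R := by
        refine (glDiff_norm_le t0 α h t ht.1 hh g R hR hg).trans ?_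
        exact mul_le_mul_of_nonneg_right (glCoef_sum_mono ht.1 ht.2 hh) hR
      rw [approxState]
      refine (norm_add_le _ _).trans ?_
      rw [norm_smul, Real.norm_eq_abs, abs_of_pos hpow]
      have := mul_le_mul_of_nonneg_left hgl hpow.le
      rw [hC]
      nlinarith
    have hx : ‖approxState t0 α h w0 rr t‖ ≤ R0 + C * R :=
      hstate rr (fun τ hτ => (hle τ hτ).trans hRr)
    have hx' : ‖approxState t0 α h w0 rr' t‖ ≤ R0 + C * R :=
      hstate rr' (fun τ hτ => (hle' τ hτ).trans hRr')
    have hkey := hlip t ht _ _ hx hx' p hp q hq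
    refine hkey.trans ?_
    -- bound the difference of the states
    set D : ℝ := sSup ((fun τ => ‖rr τ - rr' τ‖) '' Icc t0 t) with hD
    have hbddD : BddAbove ((fun τ => ‖rr τ - rr' τ‖) '' Icc t0 t) :=
      bddAbove_norm_image (g := fun τ => rr τ - rr' τ) (B := B + B')
        (fun τ hτ => (norm_sub_le _ _).trans (add_le_add (hB τ hτ) (hB' τ hτ)))
    have hleD : ∀ τ ∈ Icc t0 t, ‖rr τ - rr' τ‖ ≤ D := fun τ hτ =>
      le_csSup hbddD ⟨τ, hτ, rfl⟩
    have hD0 : 0 ≤ D := le_trans (norm_nonneg (rr t0 - rr' t0))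
      (hleD t0 (left_mem_Icc.mpr ht.1))
    have hdiff : approxState t0 α h w0 rr t - approxState t0 α h w0 rr' t
        = (h ^ (α - 1)) • glDiff t0 α h (fun τ => rr τ - rr' τ) t := by
      rw [glDiff_sub, approxState, approxState, smul_sub]
      abel
    have hgl : ‖glDiff t0 α h (fun τ => rr τ - rr' τ) t‖ ≤ S * D := by
      refine (glDiff_norm_le t0 α h t ht.1 hh _ D hD0 hleD).trans ?_
      exact mul_le_mul_of_nonneg_right (glCoef_sum_mono ht.1 ht.2 hh) hD0
    have hnd : ‖approxState t0 α h w0 rr t - approxState t0 α h w0 rr' t‖ ≤ C * D := by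
      rw [hdiff, norm_smul, Real.norm_eq_abs, abs_of_pos hpow, hC, mul_assoc]
      exact mul_le_mul_of_nonneg_left hgl hpow.le
    calc lam * ‖approxState t0 α h w0 rr t - approxState t0 α h w0 rr' t‖
        ≤ lam * (C * D) := mul_le_mul_of_nonneg_left hnd hlam.le
      _ = lam * C * D := by ring

end
end
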